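/- arXiv:2306.08750 — 2 statements merged into one kernel-verified Lean document; each statement's English description precedes it below -/
import Mathlib

section
/- Gradient bound for the single-shift regularized loss: let ε, α_T, β_T ≥ 0 and let p = (p_r)_{r∈R} be a probability vector with p_r > 0. For every r ∈ R and all z, v ∈ ℂ^d, ‖∇_z J_r(z, v)‖₂ ≤ √d · (L_{r,ε}(z,v))^{1/2} · ‖v‖₂ + α_T · p_r · ‖z‖₂, and ‖∇_v J_r(z, v)‖₂ ≤ √d · (L_{r,ε}(z,v))^{1/2} · ‖z‖₂ + β_T · p_r · ‖v‖₂. -/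
open scoped BigOperators Classical
open Finset

noncomputable section

namespace Ptycho

/-- Entry of the discrete Fourier matrix: `F_{k,j} = exp(-2πi·k·j/d)`. -/
def Fent (d : ℕ) (k j : ZMod d) : ℂ :=
  Complex.exp (-(2 * (Real.pi : ℂ) * Complex.I * (k.val : ℂ) * (j.val : ℂ)) / (d : ℂ))

/-- `[F (z ∘ S_r v)]_k`, i.e. the bilinear form `z^T Q_{r,k} v`. -/
def Qform (d : ℕ) [NeZero d] (r k : ZMod d) (z v : ZMod d → ℂ) : ℂ :=
  ∑ j : ZMod d, z j * Fent d k j * v (j - r)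

/-- Noiseless ptychographic measurement `|[F (x ∘ S_r w)]_k|²`. -/
def meas (d : ℕ) [NeZero d] (r k : ZMod d) (x w : ZMod d → ℂ) : ℝ :=
  ‖Qform d r k x w‖ ^ 2

/-- Squared Euclidean norm `‖u‖₂²`. -/
def nsq (d : ℕ) [NeZero d] (u : ZMod d → ℂ) : ℝ :=
  ∑ j : ZMod d, ‖u j‖ ^ 2

/-- Single-shift amplitude-based loss
`L_{r,ε}(z,v) = Σ_k (√(|z^T Q_{r,k} v|² + ε) − √(y_{r,k} + ε))²`. -/
def lossR (d : ℕ) [NeZero d] (y : ZMod d → ZMod d → ℝ) (ε : ℝ) (r : ZMod d)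
    (z v : ZMod d → ℂ) : ℝ :=
  ∑ k : ZMod d,
    (Real.sqrt (‖Qform d r k z v‖ ^ 2 + ε) - Real.sqrt (y r k + ε)) ^ 2

/-- Amplitude-based loss `L_ε(z,v) = Σ_{r∈R} L_{r,ε}(z,v)`. -/
def loss (d : ℕ) [NeZero d] (R : Finset (ZMod d)) (y : ZMod d → ZMod d → ℝ) (ε : ℝ)
    (z v : ZMod d → ℂ) : ℝ :=
  ∑ r ∈ R, lossR d y ε r z v

/-- Coefficient `1 − √(y_{r,k}+ε)/√(|z^T Q_{r,k} v|²+ε)` appearing in the Wirtinger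
gradients. (Lean's convention `a/0 = 0` realizes the paper's convention, since the
coefficient is always multiplied by `z^T Q_{r,k} v`.) -/
def coef (ε yrk : ℝ) (c : ℂ) : ℝ :=
  1 - Real.sqrt (yrk + ε) / Real.sqrt (‖c‖ ^ 2 + ε)

/-- Wirtinger gradient `∇_z L_{r,ε}(z,v)`; note `(Q_{r,k} v)_j = F_{k,j}·v_{j−r}`. -/
def gradZr (d : ℕ) [NeZero d] (y : ZMod d → ZMod d → ℝ) (ε : ℝ) (r : ZMod d)
    (z v : ZMod d → ℂ) : ZMod d → ℂ := fun j =>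
  ∑ k : ZMod d, (coef ε (y r k) (Qform d r k z v) : ℂ) * Qform d r k z v *
    (starRingEnd ℂ) (Fent d k j * v (j - r))

/-- Wirtinger gradient `∇_v L_{r,ε}(z,v)`; note `(Q_{r,k}^T z)_j = F_{k,j+r}·z_{j+r}`. -/
def gradVr (d : ℕ) [NeZero d] (y : ZMod d → ZMod d → ℝ) (ε : ℝ) (r : ZMod d)
    (z v : ZMod d → ℂ) : ZMod d → ℂ := fun j =>
  ∑ k : ZMod d, (coef ε (y r k) (Qform d r k z v) : ℂ) * Qform d r k z v *
    (starRingEnd ℂ) (Fent d k (j + r) * z (j + r))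

/-- Regularized loss `J(z,v) = L_ε(z,v) + α_T‖z‖₂² + β_T‖v‖₂²`. -/
def Jfun (d : ℕ) [NeZero d] (R : Finset (ZMod d)) (y : ZMod d → ZMod d → ℝ)
    (ε αT βT : ℝ) (z v : ZMod d → ℂ) : ℝ :=
  loss d R y ε z v + αT * nsq d z + βT * nsq d v

/-- Wirtinger gradient `∇_z J(z,v) = ∇_z L_ε(z,v) + α_T z`. -/
def gradZJ (d : ℕ) [NeZero d] (R : Finset (ZMod d)) (y : ZMod d → ZMod d → ℝ)
    (ε αT : ℝ) (z v : ZMod d → ℂ) : ZMod d → ℂ := fun j =>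
  (∑ r ∈ R, gradZr d y ε r z v j) + (αT : ℂ) * z j

/-- Wirtinger gradient `∇_v J(z,v) = ∇_v L_ε(z,v) + β_T v`. -/
def gradVJ (d : ℕ) [NeZero d] (R : Finset (ZMod d)) (y : ZMod d → ZMod d → ℝ)
    (ε βT : ℝ) (z v : ZMod d → ℂ) : ZMod d → ℂ := fun j =>
  (∑ r ∈ R, gradVr d y ε r z v j) + (βT : ℂ) * v j

/-- `‖y/d‖₁ = (1/d)·Σ_{r∈R} Σ_k y_{r,k}`. -/
def yd1 (d : ℕ) [NeZero d] (R : Finset (ZMod d)) (y : ZMod d → ZMod d → ℝ) : ℝ :=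
  (∑ r ∈ R, ∑ k : ZMod d, y r k) / d

/-- Real part of the Hermitian inner product `Re(u* g)`. -/
def reInner (d : ℕ) [NeZero d] (u g : ZMod d → ℂ) : ℝ :=
  (∑ j : ZMod d, (starRingEnd ℂ) (u j) * g j).re

/-- `B(z,v) = 3d·((10/3)‖z‖₂² + (10/3)‖v‖₂² + ‖y/d‖₁^{1/2}) + 3·max{α_T, β_T}`. -/
def Bfun (d : ℕ) [NeZero d] (R : Finset (ZMod d)) (y : ZMod d → ZMod d → ℝ)
    (αT βT : ℝ) (z v : ZMod d → ℂ) : ℝ :=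
  3 * d * ((10 / 3) * nsq d z + (10 / 3) * nsq d v + Real.sqrt (yd1 d R y)) +
    3 * max αT βT

/-- Single-shift regularized loss `J_r(z,v) = L_{r,ε}(z,v) + α_T p_r‖z‖₂² + β_T p_r‖v‖₂²`. -/
def JrFun (d : ℕ) [NeZero d] (y : ZMod d → ZMod d → ℝ) (ε αT βT pr : ℝ) (r : ZMod d)
    (z v : ZMod d → ℂ) : ℝ :=
  lossR d y ε r z v + αT * pr * nsq d z + βT * pr * nsq d v

/-- Wirtinger gradient `∇_z J_r(z,v) = ∇_z L_{r,ε}(z,v) + α_T p_r z`. -/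
def gradZJr (d : ℕ) [NeZero d] (y : ZMod d → ZMod d → ℝ) (ε αT pr : ℝ) (r : ZMod d)
    (z v : ZMod d → ℂ) : ZMod d → ℂ := fun j =>
  gradZr d y ε r z v j + ((αT * pr : ℝ) : ℂ) * z j

/-- Wirtinger gradient `∇_v J_r(z,v) = ∇_v L_{r,ε}(z,v) + β_T p_r v`. -/
def gradVJr (d : ℕ) [NeZero d] (y : ZMod d → ZMod d → ℝ) (ε βT pr : ℝ) (r : ZMod d)
    (z v : ZMod d → ℂ) : ZMod d → ℂ := fun j =>
  gradVr d y ε r z v j + ((βT * pr : ℝ) : ℂ) * v j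

/-- Stochastic gradient `g_z(z,v) = (1/K)·Σ_{k} p_{r^k}^{−1}·∇_z J_{r^k}(z,v)` for
sampled indices `idx : Fin K → ZMod d`. -/
def sgZ (d : ℕ) [NeZero d] (y : ZMod d → ZMod d → ℝ) (ε αT : ℝ) (p : ZMod d → ℝ)
    (K : ℕ) (idx : Fin K → ZMod d) (z v : ZMod d → ℂ) : ZMod d → ℂ := fun j =>
  ((1 / K : ℝ) : ℂ) * ∑ k : Fin K,
    (((p (idx k))⁻¹ : ℝ) : ℂ) * gradZJr d y ε αT (p (idx k)) (idx k) z v j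

/-- Stochastic gradient `g_v(z,v) = (1/K)·Σ_{k} p_{r^k}^{−1}·∇_v J_{r^k}(z,v)`. -/
def sgV (d : ℕ) [NeZero d] (y : ZMod d → ZMod d → ℝ) (ε βT : ℝ) (p : ZMod d → ℝ)
    (K : ℕ) (idx : Fin K → ZMod d) (z v : ZMod d → ℂ) : ZMod d → ℂ := fun j =>
  ((1 / K : ℝ) : ℂ) * ∑ k : Fin K,
    (((p (idx k))⁻¹ : ℝ) : ℂ) * gradVJr d y ε βT (p (idx k)) (idx k) z v j

/-- `min_{r∈R} p_r`. -/
def pmin {d : ℕ} (R : Finset (ZMod d)) (hR : R.Nonempty) (p : ZMod d → ℝ) : ℝ :=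
  R.inf' hR p

/-- `B_z(z,v) = ((15/4)d)^{1/2}·[(d‖v‖₂/(√K·min_r p_r))·(‖z‖₂‖v‖₂ + ‖y/d‖₁^{1/2}) + α_T‖z‖₂]`. -/
def BzFun (d : ℕ) [NeZero d] (R : Finset (ZMod d)) (hR : R.Nonempty)
    (y : ZMod d → ZMod d → ℝ) (αT : ℝ) (p : ZMod d → ℝ) (K : ℕ)
    (z v : ZMod d → ℂ) : ℝ :=
  Real.sqrt ((15 / 4) * d) *
    ((d * Real.sqrt (nsq d v) / (Real.sqrt K * pmin R hR p)) *
        (Real.sqrt (nsq d z) * Real.sqrt (nsq d v) + Real.sqrt (yd1 d R y))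
      + αT * Real.sqrt (nsq d z))

/-- `B_v(z,v) = ((15/4)d)^{1/2}·[(d‖z‖₂/(√K·min_r p_r))·(‖z‖₂‖v‖₂ + ‖y/d‖₁^{1/2}) + β_T‖v‖₂]`. -/
def BvFun (d : ℕ) [NeZero d] (R : Finset (ZMod d)) (hR : R.Nonempty)
    (y : ZMod d → ZMod d → ℝ) (βT : ℝ) (p : ZMod d → ℝ) (K : ℕ)
    (z v : ZMod d → ℂ) : ℝ :=
  Real.sqrt ((15 / 4) * d) *
    ((d * Real.sqrt (nsq d z) / (Real.sqrt K * pmin R hR p)) *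
        (Real.sqrt (nsq d z) * Real.sqrt (nsq d v) + Real.sqrt (yd1 d R y))
      + βT * Real.sqrt (nsq d v))


lemma abs_Fent (d : ℕ) [NeZero d] (k j : ZMod d) : ‖Fent d k j‖ = 1 := by
  have h : (-(2 * (Real.pi : ℂ) * Complex.I * (k.val : ℂ) * (j.val : ℂ)) / (d : ℂ))
      = ((-(2 * Real.pi * k.val * j.val) / d : ℝ) : ℂ) * Complex.I := by
    push_cast
    ring
  rw [Fent, h, Complex.norm_exp_ofReal_mul_I]

lemma abs_coef_mul (ε yrk : ℝ) (hε : 0 ≤ ε) (c : ℂ) :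
    ‖(coef ε yrk c : ℂ) * c‖
      ≤ |Real.sqrt (‖c‖ ^ 2 + ε) - Real.sqrt (yrk + ε)| := by
  set A := ‖c‖ with hA
  have hA0 : 0 ≤ A := norm_nonneg c
  set S := Real.sqrt (A ^ 2 + ε) with hS
  set T := Real.sqrt (yrk + ε) with hT
  have hAS : A ≤ S := by
    rw [hS]
    calc A = Real.sqrt (A ^ 2) := by rw [Real.sqrt_sq hA0]
    _ ≤ _ := Real.sqrt_le_sqrt (by linarith)
  have key : ‖(coef ε yrk c : ℂ) * c‖ = |coef ε yrk c| * A := by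
    rw [norm_mul, Complex.norm_real, Real.norm_eq_abs]
  rw [key]
  rcases eq_or_lt_of_le (Real.sqrt_nonneg (A ^ 2 + ε)) with h0 | hpos
  · have hA0' : A = 0 := le_antisymm (h0 ▸ hAS) hA0
    rw [hA0', mul_zero]
    exact abs_nonneg _
  · have hco : coef ε yrk c = (S - T) / S := by
      rw [coef, ← hA, ← hS, ← hT]
      rw [sub_div, div_self (show S ≠ 0 from hpos.ne')]
    rw [hco, abs_div, abs_of_pos hpos]
    calc |S - T| / S * A = |S - T| * (A / S) := by ring
    _ ≤ |S - T| * 1 :=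
        mul_le_mul_of_nonneg_left (by rw [div_le_one hpos]; exact hAS) (abs_nonneg _)
    _ = |S - T| := mul_one _

lemma sqrt_nsq_eq (d : ℕ) [NeZero d] (u : ZMod d → ℂ) :
    Real.sqrt (nsq d u) = ‖(WithLp.equiv 2 (ZMod d → ℂ)).symm u‖ := by
  rw [EuclideanSpace.norm_eq, nsq]
  congr 1

lemma grad_norm_bound (d : ℕ) [NeZero d] (a : ZMod d → ℂ) (s : ZMod d → ℝ)
    (ha : ∀ k, ‖a k‖ ≤ s k)
    (u : ZMod d → ZMod d → ℂ) (w : ZMod d → ℂ)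
    (hu : ∀ k, nsq d (u k) = nsq d w)
    (g : ZMod d → ℂ) (hg : g = fun j => ∑ k : ZMod d, a k * u k j) :
    Real.sqrt (nsq d g)
      ≤ Real.sqrt d * Real.sqrt (∑ k : ZMod d, s k ^ 2) * Real.sqrt (nsq d w) := by
  set L := (PiLp.continuousLinearEquiv 2 ℂ (fun _ : ZMod d => ℂ)).symm with hL
  have hnorm : ∀ f : ZMod d → ℂ, Real.sqrt (nsq d f) = ‖L f‖ := by
    intro f
    rw [sqrt_nsq_eq]
    rfl
  have hgsum : g = ∑ k : ZMod d, a k • u k := by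
    rw [hg]; funext j; simp [Finset.sum_apply, Pi.smul_apply, smul_eq_mul]
  have hLg : L g = ∑ k : ZMod d, a k • L (u k) := by
    rw [hgsum, map_sum]
    simp
  have h1 : ‖L g‖ ≤ ∑ k : ZMod d, s k * Real.sqrt (nsq d w) := by
    rw [hLg]
    refine (norm_sum_le _ _).trans ?_
    refine Finset.sum_le_sum fun k _ => ?_
    rw [norm_smul, ← hnorm, hu k]
    exact mul_le_mul_of_nonneg_right (by exact ha k)
      (Real.sqrt_nonneg _)
  rw [hnorm]
  refine h1.trans ?_
  rw [← Finset.sum_mul]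
  refine mul_le_mul_of_nonneg_right ?_ (Real.sqrt_nonneg _)
  have h2 : (∑ k : ZMod d, s k) ^ 2 ≤ (d : ℝ) * ∑ k : ZMod d, s k ^ 2 := by
    have := sq_sum_le_card_mul_sum_sq (s := (Finset.univ : Finset (ZMod d))) (f := s)
    simpa [Finset.card_univ, ZMod.card d] using this
  have hs0 : 0 ≤ ∑ k : ZMod d, s k :=
    Finset.sum_nonneg fun k _ => le_trans (norm_nonneg _) (ha k)
  calc (∑ k : ZMod d, s k) = Real.sqrt ((∑ k : ZMod d, s k) ^ 2) := (Real.sqrt_sq hs0).symm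
  _ ≤ Real.sqrt ((d : ℝ) * ∑ k : ZMod d, s k ^ 2) := Real.sqrt_le_sqrt h2
  _ = Real.sqrt d * Real.sqrt (∑ k : ZMod d, s k ^ 2) := Real.sqrt_mul (by positivity) _

lemma sqrt_nsq_add_smul (d : ℕ) [NeZero d] (f z : ZMod d → ℂ) (c : ℝ) (hc : 0 ≤ c) :
    Real.sqrt (nsq d (fun j => f j + ((c : ℝ) : ℂ) * z j))
      ≤ Real.sqrt (nsq d f) + c * Real.sqrt (nsq d z) := by
  set L := (PiLp.continuousLinearEquiv 2 ℂ (fun _ : ZMod d => ℂ)).symm with hL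
  have hnorm : ∀ g : ZMod d → ℂ, Real.sqrt (nsq d g) = ‖L g‖ := by
    intro g
    rw [sqrt_nsq_eq]
    rfl
  have heq : (fun j => f j + ((c : ℝ) : ℂ) * z j) = f + ((c : ℝ) : ℂ) • z := by
    funext j
    simp [Pi.smul_apply, smul_eq_mul]
  rw [hnorm, heq, map_add, map_smul, hnorm f, hnorm z]
  refine (norm_add_le _ _).trans ?_
  rw [norm_smul, Complex.norm_real, Real.norm_eq_abs, abs_of_nonneg hc]

lemma gradZr_bound (d : ℕ) [NeZero d] (y : ZMod d → ZMod d → ℝ) (ε : ℝ) (hε : 0 ≤ ε)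
    (r : ZMod d) (hy : ∀ k, 0 ≤ y r k) (z v : ZMod d → ℂ) :
    Real.sqrt (nsq d (gradZr d y ε r z v))
      ≤ Real.sqrt d * Real.sqrt (lossR d y ε r z v) * Real.sqrt (nsq d v) := by
  have hloss : lossR d y ε r z v
      = ∑ k : ZMod d, |Real.sqrt (‖Qform d r k z v‖ ^ 2 + ε)
          - Real.sqrt (y r k + ε)| ^ 2 := by
    simp [lossR, sq_abs]
  rw [hloss]
  refine grad_norm_bound d
    (fun k => (coef ε (y r k) (Qform d r k z v) : ℂ) * Qform d r k z v)
    (fun k => |Real.sqrt (‖Qform d r k z v‖ ^ 2 + ε) - Real.sqrt (y r k + ε)|)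
    (fun k => abs_coef_mul ε (y r k) hε _)
    (fun k j => (starRingEnd ℂ) (Fent d k j * v (j - r))) v
    (fun k => ?_) _ rfl
  unfold nsq
  calc ∑ j : ZMod d, ‖(starRingEnd ℂ) (Fent d k j * v (j - r))‖ ^ 2
      = ∑ j : ZMod d, ‖v (j - r)‖ ^ 2 := by
        refine Finset.sum_congr rfl fun j _ => ?_
        rw [Complex.norm_conj, norm_mul, abs_Fent, one_mul]
    _ = ∑ j : ZMod d, ‖v j‖ ^ 2 :=
        Equiv.sum_comp (Equiv.subRight r) (fun j => ‖v j‖ ^ 2)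

lemma gradVr_bound (d : ℕ) [NeZero d] (y : ZMod d → ZMod d → ℝ) (ε : ℝ) (hε : 0 ≤ ε)
    (r : ZMod d) (hy : ∀ k, 0 ≤ y r k) (z v : ZMod d → ℂ) :
    Real.sqrt (nsq d (gradVr d y ε r z v))
      ≤ Real.sqrt d * Real.sqrt (lossR d y ε r z v) * Real.sqrt (nsq d z) := by
  have hloss : lossR d y ε r z v
      = ∑ k : ZMod d, |Real.sqrt (‖Qform d r k z v‖ ^ 2 + ε)
          - Real.sqrt (y r k + ε)| ^ 2 := by
    simp [lossR, sq_abs]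
  rw [hloss]
  refine grad_norm_bound d
    (fun k => (coef ε (y r k) (Qform d r k z v) : ℂ) * Qform d r k z v)
    (fun k => |Real.sqrt (‖Qform d r k z v‖ ^ 2 + ε) - Real.sqrt (y r k + ε)|)
    (fun k => abs_coef_mul ε (y r k) hε _)
    (fun k j => (starRingEnd ℂ) (Fent d k (j + r) * z (j + r))) z
    (fun k => ?_) _ rfl
  unfold nsq
  calc ∑ j : ZMod d, ‖(starRingEnd ℂ) (Fent d k (j + r) * z (j + r))‖ ^ 2
      = ∑ j : ZMod d, ‖z (j + r)‖ ^ 2 := by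
        refine Finset.sum_congr rfl fun j _ => ?_
        rw [Complex.norm_conj, norm_mul, abs_Fent, one_mul]
    _ = ∑ j : ZMod d, ‖z j‖ ^ 2 :=
        Equiv.sum_comp (Equiv.addRight r) (fun j => ‖z j‖ ^ 2)

/-- **Gradient bound for the single-shift regularized loss:** for every `r ∈ R`,
`‖∇_z J_r(z,v)‖₂ ≤ √d·√(L_{r,ε}(z,v))·‖v‖₂ + α_T p_r ‖z‖₂` and
`‖∇_v J_r(z,v)‖₂ ≤ √d·√(L_{r,ε}(z,v))·‖z‖₂ + β_T p_r ‖v‖₂`. -/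
theorem single_shift_regularized_gradient_bound (d : ℕ) [NeZero d]
    (R : Finset (ZMod d)) (hR : R.Nonempty)
    (y : ZMod d → ZMod d → ℝ) (hy : ∀ r ∈ R, ∀ k : ZMod d, 0 ≤ y r k)
    (ε αT βT : ℝ) (hε : 0 ≤ ε) (hαT : 0 ≤ αT) (hβT : 0 ≤ βT)
    (p : ZMod d → ℝ) (hp : ∀ r ∈ R, 0 < p r) (hpsum : ∑ r ∈ R, p r = 1) :
    ∀ r ∈ R, ∀ z v : ZMod d → ℂ,
      Real.sqrt (nsq d (gradZJr d y ε αT (p r) r z v))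
        ≤ Real.sqrt d * Real.sqrt (lossR d y ε r z v) * Real.sqrt (nsq d v)
          + αT * p r * Real.sqrt (nsq d z) ∧
      Real.sqrt (nsq d (gradVJr d y ε βT (p r) r z v))
        ≤ Real.sqrt d * Real.sqrt (lossR d y ε r z v) * Real.sqrt (nsq d z)
          + βT * p r * Real.sqrt (nsq d v) := by
  intro r hr z v
  have hyr : ∀ k, 0 ≤ y r k := hy r hr
  have hpr : 0 < p r := hp r hr
  constructor
  · have h1 := sqrt_nsq_add_smul d (gradZr d y ε r z v) z (αT * p r)
      (mul_nonneg hαT hpr.le)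
    refine h1.trans ?_
    have h2 := gradZr_bound d y ε hε r hyr z v
    linarith [mul_le_mul_of_nonneg_left (le_refl (Real.sqrt (nsq d z)))
      (mul_nonneg hαT hpr.le)]
  · have h1 := sqrt_nsq_add_smul d (gradVr d y ε r z v) v (βT * p r)
      (mul_nonneg hβT hpr.le)
    refine h1.trans ?_
    have h2 := gradVr_bound d y ε hε r hyr z v
    linarith


end Ptycho
end
end

section
/- Descent step of gradient descent for blind ptychography: let ε, α_T, β_T ≥ 0, and let (z^t, v^t)_{t≥0} be generated by z^{t+1} = z^t − μ_t ∇_z J(z^t, v^t), v^{t+1} = v^t − ν_t ∇_v J(z^t, v^t) from arbitrary z⁰, v⁰ ∈ ℂ^d, with nonnegative step sizes satisfying μ_t, ν_t ≤ min{ B(z^t,v^t)^{−1}, ((15/4)d)^{−1/3}·‖∇_z J(z^t,v^t)‖₂^{−2/3}, ((15/4)d)^{−1/3}·‖∇_v J(z^t,v^t)‖₂^{−2/3} } (with the convention that a term b/0 in the minimum is discarded). Then for all t ≥ 0, J(z^{t+1}, v^{t+1}) ≤ J(z^t, v^t) − μ_t·‖∇_z J(z^t,v^t)‖₂² − ν_t·‖∇_v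 J(z^t,v^t)‖₂². -/
open scoped BigOperators Classical
open Finset

noncomputable section

namespace Ptycho

/-! ### Auxiliary lemmas -/

lemma cs_eps (ε : ℝ) (hε : 0 ≤ ε) (c c' : ℂ) :
    ((starRingEnd ℂ) c * c').re + ε ≤
      Real.sqrt (‖c‖ ^ 2 + ε) * Real.sqrt (‖c'‖ ^ 2 + ε) := by
  set A := ‖c‖ with hA
  set A' := ‖c'‖ with hA'
  have hA0 : 0 ≤ A := norm_nonneg c
  have hA0' : 0 ≤ A' := norm_nonneg c'
  have h1 : ((starRingEnd ℂ) c * c').re ≤ A * A' := by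
    calc ((starRingEnd ℂ) c * c').re ≤ ‖(starRingEnd ℂ) c * c'‖ :=
      Complex.re_le_norm _
    _ = A * A' := by rw [norm_mul, Complex.norm_conj]
  have h2 : A * A' + ε ≤ Real.sqrt (A ^ 2 + ε) * Real.sqrt (A' ^ 2 + ε) := by
    rw [← Real.sqrt_mul (by positivity)]
    rw [show A * A' + ε = Real.sqrt ((A * A' + ε) ^ 2) from
      (Real.sqrt_sq (by positivity)).symm]
    apply Real.sqrt_le_sqrt
    nlinarith [sq_nonneg (A - A'), sq_nonneg (A * A'), hε]
  linarith

lemma key_ineq (ε s : ℝ) (hε : 0 ≤ ε) (hs : 0 ≤ s) (c c' : ℂ) :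
    (Real.sqrt (‖c'‖ ^ 2 + ε) - s) ^ 2 ≤
      (Real.sqrt (‖c‖ ^ 2 + ε) - s) ^ 2
        + 2 * (1 - s / Real.sqrt (‖c‖ ^ 2 + ε))
            * ((starRingEnd ℂ) c * (c' - c)).re
        + ‖c' - c‖ ^ 2 := by
  set sa := Real.sqrt (‖c‖ ^ 2 + ε) with hsa
  set sa' := Real.sqrt (‖c'‖ ^ 2 + ε) with hsa'
  have hsa0 : 0 ≤ sa := Real.sqrt_nonneg _
  have hsa0' : 0 ≤ sa' := Real.sqrt_nonneg _
  have hsq : sa ^ 2 = ‖c‖ ^ 2 + ε := Real.sq_sqrt (by positivity)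
  have hsq' : sa' ^ 2 = ‖c'‖ ^ 2 + ε := Real.sq_sqrt (by positivity)
  have hexp : ‖c'‖ ^ 2 =
      ‖c‖ ^ 2 + 2 * ((starRingEnd ℂ) c * (c' - c)).re
        + ‖c' - c‖ ^ 2 := by
    simp only [Complex.sq_norm, Complex.normSq_apply, Complex.mul_re, Complex.conj_re,
      Complex.conj_im, Complex.sub_re, Complex.sub_im]
    ring
  rcases eq_or_lt_of_le hsa0 with h0 | hpos
  · have hsa_eq : sa = 0 := h0.symm
    have h1 : ‖c‖ ^ 2 + ε = 0 := by
      have := hsq; rw [hsa_eq] at this; linarith [this]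
    have hc0 : ‖c‖ = 0 := by nlinarith [norm_nonneg c]
    have hceq : c = 0 := by simpa using norm_eq_zero.mp hc0
    rw [hsa_eq, hceq]
    simp only [map_zero, zero_mul, Complex.zero_re, mul_zero, add_zero]
    have : sa' ^ 2 = ‖c' - 0‖ ^ 2 := by
      rw [hsq']; simp; nlinarith
    nlinarith [hsa0', hs]
  · have hkey := cs_eps ε hε c c'
    have hre : ((starRingEnd ℂ) c * c').re
        = ((starRingEnd ℂ) c * (c' - c)).re + ‖c‖ ^ 2 := by
      have : (starRingEnd ℂ) c * c' = (starRingEnd ℂ) c * (c' - c) + c * (starRingEnd ℂ) c := by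
        ring
      rw [this, Complex.add_re, Complex.mul_conj, Complex.sq_norm]
      simp
    rw [hre] at hkey
    have hdiv : s / sa * sa = s := div_mul_cancel₀ s (ne_of_gt hpos)
    nlinarith [mul_le_mul_of_nonneg_left hkey hs, sq_nonneg (sa - sa'), hs,
      mul_pos hpos hpos]

lemma coef_abs_le (ε y : ℝ) (hε : 0 ≤ ε) (hy : 0 ≤ y) (c : ℂ) :
    |coef ε y c| * ‖c‖ ≤ ‖c‖ + Real.sqrt y := by
  set A := ‖c‖ with hA
  have hA0 : 0 ≤ A := norm_nonneg c
  set sa := Real.sqrt (A ^ 2 + ε) with hsa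
  set s := Real.sqrt (y + ε) with hs
  have hsa0 : 0 ≤ sa := Real.sqrt_nonneg _
  have hs0 : 0 ≤ s := Real.sqrt_nonneg _
  have hsy0 : 0 ≤ Real.sqrt y := Real.sqrt_nonneg _
  have hsq : sa ^ 2 = A ^ 2 + ε := Real.sq_sqrt (by positivity)
  have hssq : s ^ 2 = y + ε := Real.sq_sqrt (by positivity)
  have hsyq : Real.sqrt y ^ 2 = y := Real.sq_sqrt hy
  have hco : coef ε y c = 1 - s / sa := rfl
  rcases le_or_gt (s / sa) 1 with hle | hgt
  · have h1 : |coef ε y c| ≤ 1 := by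
      have hdn : 0 ≤ s / sa := div_nonneg hs0 hsa0
      rw [hco, abs_le]
      constructor <;> linarith
    nlinarith
  · have hsapos : 0 < sa := by
      by_contra hcon
      push_neg at hcon
      have : sa = 0 := le_antisymm hcon hsa0
      rw [this] at hgt; simp at hgt; linarith
    have h1 : |coef ε y c| ≤ s / sa := by
      rw [hco, abs_le]
      constructor <;> [linarith; linarith]
    have h2 : s * A ≤ sa * A + sa * Real.sqrt y := by
      nlinarith [sq_nonneg (A - Real.sqrt y), sq_nonneg (A * Real.sqrt y),
        mul_nonneg hA0 hsy0, mul_nonneg hsa0 hsy0, mul_nonneg hsa0 hA0,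
        sq_nonneg (sa * A - sa * Real.sqrt y)]
    have h3 : s / sa * A ≤ A + Real.sqrt y := by
      rw [div_mul_eq_mul_div, div_le_iff₀ hsapos]
      nlinarith
    calc |coef ε y c| * A ≤ s / sa * A := mul_le_mul_of_nonneg_right h1 hA0
    _ ≤ A + Real.sqrt y := h3

lemma sum_val_range (d : ℕ) [NeZero d] (f : ℕ → ℂ) :
    ∑ k : ZMod d, f k.val = ∑ i ∈ Finset.range d, f i := by
  refine Finset.sum_nbij' (fun k => k.val) (fun i => ((i : ℕ) : ZMod d)) ?_ ?_ ?_ ?_ ?_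
  · intro a _; exact Finset.mem_range.mpr (ZMod.val_lt a)
  · intro a _; exact Finset.mem_univ _
  · intro a _; exact ZMod.natCast_rightInverse a
  · intro a ha; exact ZMod.val_cast_of_lt (Finset.mem_range.mp ha)
  · intro a _; rfl

lemma orth (d : ℕ) [NeZero d] (j j' : ZMod d) :
    ∑ k : ZMod d, Fent d k j * (starRingEnd ℂ) (Fent d k j')
      = if j = j' then (d : ℂ) else 0 := by
  have hd0 : (d : ℂ) ≠ 0 := Nat.cast_ne_zero.mpr (NeZero.ne d)
  set X : ℂ := (j'.val : ℂ) - (j.val : ℂ) with hX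
  set θ : ℂ := 2 * (Real.pi : ℂ) * Complex.I * X / d with hθ
  have hterm : ∀ k : ZMod d, Fent d k j * (starRingEnd ℂ) (Fent d k j')
      = Complex.exp θ ^ k.val := by
    intro k
    rw [Fent, Fent, ← Complex.exp_conj, ← Complex.exp_add, ← Complex.exp_nat_mul]
    congr 1
    have hc : (starRingEnd ℂ) (-(2 * (Real.pi : ℂ) * Complex.I * (k.val : ℂ) * (j'.val : ℂ)) / (d : ℂ))
        = (2 * (Real.pi : ℂ) * Complex.I * (k.val : ℂ) * (j'.val : ℂ)) / (d : ℂ) := by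
      simp only [map_div₀, map_neg, map_mul, map_ofNat, Complex.conj_I,
        Complex.conj_natCast, Complex.conj_ofReal]
      ring
    rw [hc, hθ, hX]
    field_simp
    ring
  simp only [hterm]
  rw [sum_val_range d (fun i => Complex.exp θ ^ i)]
  by_cases hjj : j = j'
  · subst hjj
    simp only [hX, sub_self] at hθ
    simp only [hθ, mul_zero, zero_div, Complex.exp_zero, one_pow, if_pos rfl]
    simp
  · rw [if_neg hjj]
    have h2pi : (2 * (Real.pi : ℂ) * Complex.I) ≠ 0 := by
      simp [Complex.I_ne_zero, Complex.ofReal_ne_zero, Real.pi_ne_zero]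
    have hx1 : Complex.exp θ ≠ 1 := by
      intro h
      rcases Complex.exp_eq_one_iff.mp h with ⟨n, hn⟩
      have h1 : (2 * (Real.pi : ℂ) * Complex.I * X / d) * d
          = ((n : ℂ) * (2 * (Real.pi : ℂ) * Complex.I)) * d := by
        rw [← hθ, hn]
      rw [div_mul_cancel₀ _ hd0] at h1
      have heq : 2 * (Real.pi : ℂ) * Complex.I * X
          = 2 * (Real.pi : ℂ) * Complex.I * ((n : ℂ) * d) := by
        linear_combination h1
      have hnd : X = (n : ℂ) * d := mul_left_cancel₀ h2pi heq
      rw [hX] at hnd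
      have hint : (j'.val : ℤ) - (j.val : ℤ) = n * d := by exact_mod_cast hnd
      have hlt : (j.val : ℤ) < d := by exact_mod_cast ZMod.val_lt j
      have hlt' : (j'.val : ℤ) < d := by exact_mod_cast ZMod.val_lt j'
      have hj0 : (0 : ℤ) ≤ (j.val : ℤ) := by positivity
      have hj0' : (0 : ℤ) ≤ (j'.val : ℤ) := by positivity
      have hd1 : (1 : ℤ) ≤ d := by
        exact_mod_cast Nat.one_le_iff_ne_zero.mpr (NeZero.ne d)
      have hne : j.val ≠ j'.val := fun hv => hjj (ZMod.val_injective d hv)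
      have hneZ : (j.val : ℤ) ≠ (j'.val : ℤ) := by exact_mod_cast hne
      rcases lt_trichotomy n 0 with hn0 | hn0 | hn0
      · have h2 : n * (d : ℤ) ≤ -1 * d :=
          mul_le_mul_of_nonneg_right (by omega) (by linarith)
        linarith
      · subst hn0; rw [zero_mul] at hint
        exact hneZ (by linarith)
      · have h2 : 1 * (d : ℤ) ≤ n * d :=
          mul_le_mul_of_nonneg_right (by omega) (by linarith)
        linarith
    rw [geom_sum_eq hx1]
    have hxd : Complex.exp θ ^ d = 1 := by
      rw [← Complex.exp_nat_mul]
      have harg : (d : ℂ) * θ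
          = (((j'.val : ℤ) - (j.val : ℤ) : ℤ) : ℂ) * (2 * (Real.pi : ℂ) * Complex.I) := by
        rw [hθ, hX]; push_cast; field_simp
      rw [harg, Complex.exp_int_mul_two_pi_mul_I]
    rw [hxd]
    simp

lemma parseval (d : ℕ) [NeZero d] (x : ZMod d → ℂ) :
    ∑ k : ZMod d, Complex.normSq (∑ j : ZMod d, x j * Fent d k j)
      = d * ∑ j : ZMod d, Complex.normSq (x j) := by
  have hC : ∑ k : ZMod d, ((∑ j : ZMod d, x j * Fent d k j) *
        (starRingEnd ℂ) (∑ j : ZMod d, x j * Fent d k j))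
      = (d : ℂ) * ∑ j : ZMod d, (x j * (starRingEnd ℂ) (x j)) := by
    calc ∑ k : ZMod d, ((∑ j : ZMod d, x j * Fent d k j) *
          (starRingEnd ℂ) (∑ j : ZMod d, x j * Fent d k j))
        = ∑ k : ZMod d, ∑ j : ZMod d, ∑ j' : ZMod d,
            (x j * (starRingEnd ℂ) (x j')) * (Fent d k j * (starRingEnd ℂ) (Fent d k j')) := by
          apply Finset.sum_congr rfl; intro k _
          rw [map_sum, Finset.sum_mul_sum]
          apply Finset.sum_congr rfl; intro j _
          apply Finset.sum_congr rfl; intro j' _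
          rw [map_mul]; ring
      _ = ∑ j : ZMod d, ∑ j' : ZMod d,
            (x j * (starRingEnd ℂ) (x j'))
              * ∑ k : ZMod d, (Fent d k j * (starRingEnd ℂ) (Fent d k j')) := by
          rw [Finset.sum_comm]
          apply Finset.sum_congr rfl; intro j _
          rw [Finset.sum_comm]
          apply Finset.sum_congr rfl; intro j' _
          rw [Finset.mul_sum]
      _ = ∑ j : ZMod d, (x j * (starRingEnd ℂ) (x j)) * d := by
          apply Finset.sum_congr rfl; intro j _
          simp only [orth, mul_ite, mul_zero]
          rw [Finset.sum_ite_eq]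
          simp
      _ = (d : ℂ) * ∑ j : ZMod d, (x j * (starRingEnd ℂ) (x j)) := by
          rw [← Finset.sum_mul, mul_comm]
  simp only [Complex.mul_conj] at hC
  have h1 : ((∑ k : ZMod d, Complex.normSq (∑ j : ZMod d, x j * Fent d k j) : ℝ) : ℂ)
      = ((d * ∑ j : ZMod d, Complex.normSq (x j) : ℝ) : ℂ) := by
    push_cast
    exact hC
  exact_mod_cast h1

lemma qform_rewrite (d : ℕ) [NeZero d] (r k : ZMod d) (u w : ZMod d → ℂ) :
    Qform d r k u w = ∑ j : ZMod d, (u j * w (j - r)) * Fent d k j := by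
  apply Finset.sum_congr rfl; intro j _; ring

lemma qsum_le (d : ℕ) [NeZero d] (R : Finset (ZMod d)) (u w : ZMod d → ℂ) :
    ∑ r ∈ R, ∑ k : ZMod d, ‖Qform d r k u w‖ ^ 2
      ≤ d * (nsq d u * nsq d w) := by
  have hper : ∀ r : ZMod d, ∑ k : ZMod d, ‖Qform d r k u w‖ ^ 2
      = d * ∑ j : ZMod d, Complex.normSq (u j) * Complex.normSq (w (j - r)) := by
    intro r
    simp only [qform_rewrite d _ _ u w, Complex.sq_norm]
    rw [parseval]
    congr 1
    apply Finset.sum_congr rfl; intro j _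
    rw [Complex.normSq_mul]
  simp only [hper]
  have hsub : ∑ r ∈ R, (d : ℝ) * ∑ j : ZMod d, Complex.normSq (u j) * Complex.normSq (w (j - r))
      ≤ ∑ r : ZMod d, (d : ℝ) * ∑ j : ZMod d, Complex.normSq (u j) * Complex.normSq (w (j - r)) := by
    apply Finset.sum_le_sum_of_subset_of_nonneg (Finset.subset_univ R)
    intro r _ _
    apply mul_nonneg (Nat.cast_nonneg d)
    apply Finset.sum_nonneg; intro j _
    exact mul_nonneg (Complex.normSq_nonneg _) (Complex.normSq_nonneg _)
  refine hsub.trans ?_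
  rw [← Finset.mul_sum]
  rw [Finset.sum_comm]
  have h2 : ∀ j : ZMod d, ∑ r : ZMod d, Complex.normSq (u j) * Complex.normSq (w (j - r))
      = Complex.normSq (u j) * nsq d w := by
    intro j
    rw [← Finset.mul_sum]
    congr 1
    rw [nsq]
    rw [Fintype.sum_equiv (Equiv.subLeft j) (fun r => Complex.normSq (w (j - r)))
      (fun i => Complex.normSq (w i)) (fun r => rfl)]
    simp only [Complex.sq_norm]
  simp only [h2]
  rw [← Finset.sum_mul]
  have hu : ∑ j : ZMod d, Complex.normSq (u j) = nsq d u := by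
    rw [nsq]; simp only [Complex.sq_norm]
  rw [hu]

lemma Qform_expand (d : ℕ) [NeZero d] (r k : ZMod d) (z0 v0 g h : ZMod d → ℂ) (μ0 ν0 : ℝ) :
    Qform d r k (fun j => z0 j - (μ0 : ℂ) * g j) (fun j => v0 j - (ν0 : ℂ) * h j)
      = Qform d r k z0 v0 - (μ0 : ℂ) * Qform d r k g v0 - (ν0 : ℂ) * Qform d r k z0 h
        + (μ0 : ℂ) * (ν0 : ℂ) * Qform d r k g h := by
  simp only [Qform, Finset.mul_sum, ← Finset.sum_sub_distrib, ← Finset.sum_add_distrib]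
  apply Finset.sum_congr rfl; intro j _; ring

lemma inner_gradZr (d : ℕ) [NeZero d] (y : ZMod d → ZMod d → ℝ) (ε : ℝ) (r : ZMod d)
    (z v u : ZMod d → ℂ) :
    ∑ j : ZMod d, (starRingEnd ℂ) (u j) * gradZr d y ε r z v j
      = ∑ k : ZMod d, (coef ε (y r k) (Qform d r k z v) : ℂ) * Qform d r k z v *
          (starRingEnd ℂ) (Qform d r k u v) := by
  simp only [gradZr, Finset.mul_sum]
  rw [Finset.sum_comm]
  apply Finset.sum_congr rfl; intro k _
  set A := (coef ε (y r k) (Qform d r k z v) : ℂ) * Qform d r k z v with hA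
  rw [show Qform d r k u v = ∑ j : ZMod d, u j * Fent d k j * v (j - r) from rfl,
    map_sum, Finset.mul_sum]
  apply Finset.sum_congr rfl; intro j _
  simp only [map_mul]
  ring

lemma inner_gradVr (d : ℕ) [NeZero d] (y : ZMod d → ZMod d → ℝ) (ε : ℝ) (r : ZMod d)
    (z v w : ZMod d → ℂ) :
    ∑ j : ZMod d, (starRingEnd ℂ) (w j) * gradVr d y ε r z v j
      = ∑ k : ZMod d, (coef ε (y r k) (Qform d r k z v) : ℂ) * Qform d r k z v *
          (starRingEnd ℂ) (Qform d r k z w) := by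
  simp only [gradVr, Finset.mul_sum]
  rw [Finset.sum_comm]
  apply Finset.sum_congr rfl; intro k _
  have hq : Qform d r k z w = ∑ j : ZMod d, z (j + r) * Fent d k (j + r) * w j := by
    rw [Qform]
    refine Fintype.sum_equiv (Equiv.subRight r)
      (fun i => z i * Fent d k i * w (i - r))
      (fun j => z (j + r) * Fent d k (j + r) * w j) ?_
    intro i
    simp [Equiv.subRight, sub_add_cancel]
  rw [hq, map_sum, Finset.mul_sum]
  apply Finset.sum_congr rfl; intro j _
  simp only [map_mul]
  ring

lemma relin (co μ0 ν0 : ℝ) (c P Q W : ℂ) :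
    2 * co * ((starRingEnd ℂ) c *
        ((c - (μ0 : ℂ) * P - (ν0 : ℂ) * Q + (μ0 : ℂ) * (ν0 : ℂ) * W) - c)).re
      = (-2 * μ0) * ((co : ℂ) * c * (starRingEnd ℂ) P).re
        + (-2 * ν0) * ((co : ℂ) * c * (starRingEnd ℂ) Q).re
        + (2 * (μ0 * ν0)) * ((co : ℂ) * c * (starRingEnd ℂ) W).re := by
  simp only [Complex.mul_re, Complex.sub_re, Complex.sub_im, Complex.add_re, Complex.add_im,
    Complex.mul_im, Complex.conj_re, Complex.conj_im, Complex.ofReal_re, Complex.ofReal_im]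
  ring

lemma absD_le (μ0 ν0 : ℝ) (hμ : 0 ≤ μ0) (hν : 0 ≤ ν0) (c P Q W : ℂ) :
    ‖(c - (μ0 : ℂ) * P - (ν0 : ℂ) * Q + (μ0 : ℂ) * (ν0 : ℂ) * W) - c‖ ^ 2
      ≤ 3 * (μ0 ^ 2 * ‖P‖ ^ 2) + 3 * (ν0 ^ 2 * ‖Q‖ ^ 2)
        + 3 * (μ0 ^ 2 * ν0 ^ 2 * ‖W‖ ^ 2) := by
  have h0 : (c - (μ0 : ℂ) * P - (ν0 : ℂ) * Q + (μ0 : ℂ) * (ν0 : ℂ) * W) - c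
      = (-((μ0 : ℂ) * P) + -((ν0 : ℂ) * Q)) + (μ0 : ℂ) * (ν0 : ℂ) * W := by ring
  have h1 : ‖(c - (μ0 : ℂ) * P - (ν0 : ℂ) * Q + (μ0 : ℂ) * (ν0 : ℂ) * W) - c‖
      ≤ μ0 * ‖P‖ + ν0 * ‖Q‖ + μ0 * ν0 * ‖W‖ := by
    rw [h0]
    refine (norm_add_le _ _).trans ?_
    have h2 := norm_add_le (-((μ0 : ℂ) * P)) (-((ν0 : ℂ) * Q))
    have e1 : ‖-((μ0 : ℂ) * P)‖ = μ0 * ‖P‖ := by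
      rw [norm_neg, norm_mul, Complex.norm_real, Real.norm_eq_abs, abs_of_nonneg hμ]
    have e2 : ‖-((ν0 : ℂ) * Q)‖ = ν0 * ‖Q‖ := by
      rw [norm_neg, norm_mul, Complex.norm_real, Real.norm_eq_abs, abs_of_nonneg hν]
    have e3 : ‖(μ0 : ℂ) * (ν0 : ℂ) * W‖ = μ0 * ν0 * ‖W‖ := by
      rw [norm_mul, norm_mul, Complex.norm_real, Complex.norm_real, Real.norm_eq_abs,
        Real.norm_eq_abs, abs_of_nonneg hμ, abs_of_nonneg hν]
    rw [e1, e2] at h2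
    rw [e3]
    linarith
  nlinarith [norm_nonneg ((c - (μ0 : ℂ) * P - (ν0 : ℂ) * Q + (μ0 : ℂ) * (ν0 : ℂ) * W) - c),
    sq_nonneg (μ0 * ‖P‖ - ν0 * ‖Q‖),
    sq_nonneg (μ0 * ‖P‖ - μ0 * ν0 * ‖W‖),
    sq_nonneg (ν0 * ‖Q‖ - μ0 * ν0 * ‖W‖)]

lemma cs_sum {ι : Type*} (s : Finset ι) (f g : ι → ℝ) :
    ∑ i ∈ s, f i * g i ≤ Real.sqrt (∑ i ∈ s, f i ^ 2) * Real.sqrt (∑ i ∈ s, g i ^ 2) := by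
  have h := Finset.sum_mul_sq_le_sq_mul_sq s f g
  calc ∑ i ∈ s, f i * g i ≤ |∑ i ∈ s, f i * g i| := le_abs_self _
  _ = Real.sqrt ((∑ i ∈ s, f i * g i) ^ 2) := (Real.sqrt_sq_eq_abs _).symm
  _ ≤ Real.sqrt ((∑ i ∈ s, f i ^ 2) * ∑ i ∈ s, g i ^ 2) := Real.sqrt_le_sqrt h
  _ = Real.sqrt (∑ i ∈ s, f i ^ 2) * Real.sqrt (∑ i ∈ s, g i ^ 2) := by
      rw [Real.sqrt_mul (Finset.sum_nonneg fun i _ => sq_nonneg _)]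

lemma cube_bound (dr m γ : ℝ) (hd : 0 < dr) (hm : 0 ≤ m) (hγ : 0 < γ)
    (h : m ≤ ((15 / 4) * dr : ℝ) ^ (-(1 / 3) : ℝ) * Real.sqrt γ ^ (-(2 / 3) : ℝ)) :
    m ^ 3 * γ ≤ 4 / (15 * dr) := by
  have hbase : (0:ℝ) < (15 / 4) * dr := by linarith
  have hsg : 0 < Real.sqrt γ := Real.sqrt_pos.mpr hγ
  have hr1 : ((((15 / 4) * dr : ℝ)) ^ (-(1 / 3) : ℝ)) ^ (3 : ℕ) = ((15 / 4) * dr)⁻¹ := by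
    rw [← Real.rpow_natCast ((((15 / 4) * dr : ℝ)) ^ (-(1 / 3) : ℝ)) 3,
      ← Real.rpow_mul hbase.le]
    rw [show (-(1 / 3) : ℝ) * ((3 : ℕ) : ℝ) = -1 by push_cast; norm_num, Real.rpow_neg_one]
  have hr2 : (Real.sqrt γ ^ (-(2 / 3) : ℝ)) ^ (3 : ℕ) = γ⁻¹ := by
    rw [← Real.rpow_natCast (Real.sqrt γ ^ (-(2 / 3) : ℝ)) 3, ← Real.rpow_mul hsg.le]
    rw [show (-(2 / 3) : ℝ) * ((3 : ℕ) : ℝ) = -(2 : ℝ) by push_cast; norm_num]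
    rw [show (-(2:ℝ)) = -((2:ℕ):ℝ) by norm_num, Real.rpow_neg hsg.le, Real.rpow_natCast]
    rw [Real.sq_sqrt hγ.le]
  have h3 : m ^ 3 ≤ ((15 / 4) * dr)⁻¹ * γ⁻¹ := by
    calc m ^ 3 ≤ (((15 / 4) * dr : ℝ) ^ (-(1 / 3) : ℝ) * Real.sqrt γ ^ (-(2 / 3) : ℝ)) ^ 3 :=
          pow_le_pow_left₀ hm h 3
    _ = ((15 / 4) * dr)⁻¹ * γ⁻¹ := by rw [mul_pow, hr1, hr2]
  calc m ^ 3 * γ ≤ (((15 / 4) * dr)⁻¹ * γ⁻¹) * γ :=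
        mul_le_mul_of_nonneg_right h3 hγ.le
  _ = ((15 / 4) * dr)⁻¹ * (γ⁻¹ * γ) := by ring
  _ = ((15 / 4) * dr)⁻¹ := by rw [inv_mul_cancel₀ (ne_of_gt hγ), mul_one]
  _ = 4 / (15 * dr) := by
      rw [show ((15 / 4) * dr : ℝ) = (15 * dr) / 4 by ring, inv_div]

lemma nsq_nonneg (d : ℕ) [NeZero d] (u : ZMod d → ℂ) : 0 ≤ nsq d u :=
  Finset.sum_nonneg fun j _ => sq_nonneg _

lemma nsq_step (d : ℕ) [NeZero d] (a b : ZMod d → ℂ) (μ0 : ℝ) :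
    nsq d (fun j => a j - (μ0 : ℂ) * b j)
      = nsq d a - 2 * μ0 * (∑ j : ZMod d, (starRingEnd ℂ) (a j) * b j).re
        + μ0 ^ 2 * nsq d b := by
  simp only [nsq, Complex.sq_norm, Complex.re_sum, Finset.mul_sum]
  rw [← Finset.sum_sub_distrib, ← Finset.sum_add_distrib]
  apply Finset.sum_congr rfl; intro j _
  simp only [Complex.normSq_apply, Complex.mul_re, Complex.sub_re, Complex.sub_im,
    Complex.mul_im, Complex.conj_re, Complex.conj_im, Complex.ofReal_re, Complex.ofReal_im]
  ring

lemma re_swap (d : ℕ) [NeZero d] (a b : ZMod d → ℂ) :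
    (∑ j : ZMod d, (starRingEnd ℂ) (a j) * b j).re
      = (∑ j : ZMod d, (starRingEnd ℂ) (b j) * a j).re := by
  have h : (∑ j : ZMod d, (starRingEnd ℂ) (a j) * b j)
      = (starRingEnd ℂ) (∑ j : ZMod d, (starRingEnd ℂ) (b j) * a j) := by
    rw [map_sum]
    apply Finset.sum_congr rfl; intro j _
    rw [map_mul, Complex.conj_conj]
    ring
  rw [h, Complex.conj_re]

lemma cs_sum2 {ι κ : Type*} (s : Finset ι) (t : Finset κ) (f g : ι → κ → ℝ) :
    ∑ i ∈ s, ∑ k ∈ t, f i k * g i k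
      ≤ Real.sqrt (∑ i ∈ s, ∑ k ∈ t, f i k ^ 2) * Real.sqrt (∑ i ∈ s, ∑ k ∈ t, g i k ^ 2) := by
  have h := cs_sum (s ×ˢ t) (fun p => f p.1 p.2) (fun p => g p.1 p.2)
  rw [Finset.sum_product, Finset.sum_product, Finset.sum_product] at h
  exact h



set_option maxHeartbeats 2000000 in
/-- **Descent step of gradient descent for blind ptychography:** with step sizes
`μ_t, ν_t ≤ min{B(z^t,v^t)^{−1}, ((15/4)d)^{−1/3}‖∇_z J‖₂^{−2/3}, ((15/4)d)^{−1/3}‖∇_v J‖₂^{−2/3}}`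
(terms with division by zero discarded from the minimum, encoded below by guarding each
inequality with the nonvanishing of the corresponding base), the value of `J` decreases:
`J(z^{t+1},v^{t+1}) ≤ J(z^t,v^t) − μ_t‖∇_z J(z^t,v^t)‖₂² − ν_t‖∇_v J(z^t,v^t)‖₂²`. -/
theorem gradient_descent_step (d : ℕ) [NeZero d]
    (R : Finset (ZMod d)) (hR : R.Nonempty)
    (y : ZMod d → ZMod d → ℝ) (hy : ∀ r ∈ R, ∀ k : ZMod d, 0 ≤ y r k)
    (ε αT βT : ℝ) (hε : 0 ≤ ε) (hαT : 0 ≤ αT) (hβT : 0 ≤ βT)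
    (z v : ℕ → ZMod d → ℂ) (μ ν : ℕ → ℝ)
    (hμ0 : ∀ t, 0 ≤ μ t) (hν0 : ∀ t, 0 ≤ ν t)
    (hμB : ∀ t, Bfun d R y αT βT (z t) (v t) ≠ 0 →
      μ t ≤ (Bfun d R y αT βT (z t) (v t))⁻¹)
    (hνB : ∀ t, Bfun d R y αT βT (z t) (v t) ≠ 0 →
      ν t ≤ (Bfun d R y αT βT (z t) (v t))⁻¹)
    (hμz : ∀ t, Real.sqrt (nsq d (gradZJ d R y ε αT (z t) (v t))) ≠ 0 →
      μ t ≤ ((15 / 4) * d : ℝ) ^ (-(1 / 3) : ℝ) *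
        Real.sqrt (nsq d (gradZJ d R y ε αT (z t) (v t))) ^ (-(2 / 3) : ℝ))
    (hμv : ∀ t, Real.sqrt (nsq d (gradVJ d R y ε βT (z t) (v t))) ≠ 0 →
      μ t ≤ ((15 / 4) * d : ℝ) ^ (-(1 / 3) : ℝ) *
        Real.sqrt (nsq d (gradVJ d R y ε βT (z t) (v t))) ^ (-(2 / 3) : ℝ))
    (hνz : ∀ t, Real.sqrt (nsq d (gradZJ d R y ε αT (z t) (v t))) ≠ 0 →
      ν t ≤ ((15 / 4) * d : ℝ) ^ (-(1 / 3) : ℝ) *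
        Real.sqrt (nsq d (gradZJ d R y ε αT (z t) (v t))) ^ (-(2 / 3) : ℝ))
    (hνv : ∀ t, Real.sqrt (nsq d (gradVJ d R y ε βT (z t) (v t))) ≠ 0 →
      ν t ≤ ((15 / 4) * d : ℝ) ^ (-(1 / 3) : ℝ) *
        Real.sqrt (nsq d (gradVJ d R y ε βT (z t) (v t))) ^ (-(2 / 3) : ℝ))
    (hzrec : ∀ t, z (t + 1) =
      fun j => z t j - (μ t : ℂ) * gradZJ d R y ε αT (z t) (v t) j)
    (hvrec : ∀ t, v (t + 1) =
      fun j => v t j - (ν t : ℂ) * gradVJ d R y ε βT (z t) (v t) j) :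
    ∀ t, Jfun d R y ε αT βT (z (t + 1)) (v (t + 1))
      ≤ Jfun d R y ε αT βT (z t) (v t)
        - μ t * nsq d (gradZJ d R y ε αT (z t) (v t))
        - ν t * nsq d (gradVJ d R y ε βT (z t) (v t)) := by
  intro t
  set z0 : ZMod d → ℂ := z t with hz0def
  set v0 : ZMod d → ℂ := v t with hv0def
  set μ0 : ℝ := μ t with hμ0def
  set ν0 : ℝ := ν t with hν0def
  set g : ZMod d → ℂ := gradZJ d R y ε αT z0 v0 with hgdef
  set h : ZMod d → ℂ := gradVJ d R y ε βT z0 v0 with hhdef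
  set γ : ℝ := nsq d g with hγdef
  set η : ℝ := nsq d h with hηdef
  have hμnn : 0 ≤ μ0 := hμ0 t
  have hνnn : 0 ≤ ν0 := hν0 t
  have hγ0 : 0 ≤ γ := nsq_nonneg d g
  have hη0 : 0 ≤ η := nsq_nonneg d h
  have hZ0 : 0 ≤ nsq d z0 := nsq_nonneg d z0
  have hV0 : 0 ≤ nsq d v0 := nsq_nonneg d v0
  have hd1 : (1 : ℝ) ≤ d := by
    exact_mod_cast Nat.one_le_iff_ne_zero.mpr (NeZero.ne d)
  have hdpos : (0 : ℝ) < d := by linarith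
  have hmax0 : 0 ≤ max αT βT := le_trans hαT (le_max_left αT βT)
  have hyd0 : 0 ≤ Real.sqrt (yd1 d R y) := Real.sqrt_nonneg _
  have hz1 : z (t + 1) = fun j => z0 j - (μ0 : ℂ) * g j := hzrec t
  have hv1 : v (t + 1) = fun j => v0 j - (ν0 : ℂ) * h j := hvrec t
  by_cases hB : Bfun d R y αT βT z0 v0 = 0
  · -- degenerate case: B = 0 forces z0 = v0 = 0, hence zero gradients
    have hBx : 3 * (d : ℝ) * ((10 / 3) * nsq d z0 + (10 / 3) * nsq d v0
        + Real.sqrt (yd1 d R y)) + 3 * max αT βT = 0 := hB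
    have hX0 : 0 ≤ (10 / 3) * nsq d z0 + (10 / 3) * nsq d v0 + Real.sqrt (yd1 d R y) := by
      linarith
    have hin : (10 / 3) * nsq d z0 + (10 / 3) * nsq d v0 + Real.sqrt (yd1 d R y) = 0 := by
      rcases eq_or_lt_of_le hX0 with he | hlt
      · exact he.symm
      · exfalso
        have hdX := mul_pos hdpos hlt
        linarith [hdX, hmax0, hBx]
    have hZz : nsq d z0 = 0 := by linarith
    have hz00 : ∀ j, z0 j = 0 := by
      intro j
      have hle : ‖z0 j‖ ^ 2 ≤ nsq d z0 :=
        Finset.single_le_sum (f := fun i => ‖z0 i‖ ^ 2)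
          (fun i _ => sq_nonneg _) (Finset.mem_univ j)
      have hsq0 : ‖z0 j‖ ^ 2 = 0 :=
        le_antisymm (by linarith) (sq_nonneg _)
      have habs : ‖z0 j‖ = 0 :=
        (pow_eq_zero_iff (two_ne_zero)).mp hsq0
      exact norm_eq_zero.mp habs
    have hQ0 : ∀ r k : ZMod d, Qform d r k z0 v0 = 0 := by
      intro r k
      apply Finset.sum_eq_zero
      intro j _
      rw [hz00 j]; ring
    have hg0 : ∀ j, g j = 0 := by
      intro j
      show (∑ r ∈ R, gradZr d y ε r z0 v0 j) + (αT : ℂ) * z0 j = 0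
      rw [hz00 j]
      have hze : ∀ r ∈ R, gradZr d y ε r z0 v0 j = 0 := by
        intro r _
        apply Finset.sum_eq_zero
        intro k _
        rw [hQ0 r k]; ring
      rw [Finset.sum_eq_zero hze]; ring
    have hh0 : ∀ j, h j = 0 := by
      intro j
      show (∑ r ∈ R, gradVr d y ε r z0 v0 j) + (βT : ℂ) * v0 j = 0
      have hVv : nsq d v0 = 0 := by linarith
      have hv00 : v0 j = 0 := by
        have hle : ‖v0 j‖ ^ 2 ≤ nsq d v0 :=
          Finset.single_le_sum (f := fun i => ‖v0 i‖ ^ 2)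
            (fun i _ => sq_nonneg _) (Finset.mem_univ j)
        have hsq0 : ‖v0 j‖ ^ 2 = 0 :=
          le_antisymm (by linarith) (sq_nonneg _)
        have habs : ‖v0 j‖ = 0 :=
          (pow_eq_zero_iff (two_ne_zero)).mp hsq0
        exact norm_eq_zero.mp habs
      rw [hv00]
      have hze : ∀ r ∈ R, gradVr d y ε r z0 v0 j = 0 := by
        intro r _
        apply Finset.sum_eq_zero
        intro k _
        rw [hQ0 r k]; ring
      rw [Finset.sum_eq_zero hze]; ring
    have hγz : γ = 0 := by
      rw [hγdef]
      apply Finset.sum_eq_zero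
      intro j _
      rw [hg0 j]; simp
    have hηz : η = 0 := by
      rw [hηdef]
      apply Finset.sum_eq_zero
      intro j _
      rw [hh0 j]; simp
    have hzz : z (t + 1) = z0 := by
      rw [hz1]; funext j; rw [hg0 j]; ring
    have hvv : v (t + 1) = v0 := by
      rw [hv1]; funext j; rw [hh0 j]; ring
    rw [hzz, hvv, hγz, hηz]
    simp
  · -- main case
    have hB0 : 0 ≤ Bfun d R y αT βT z0 v0 := by
      have hX0 : 0 ≤ (10 / 3) * nsq d z0 + (10 / 3) * nsq d v0 + Real.sqrt (yd1 d R y) := by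
        linarith
      have h3d : 0 ≤ 3 * (d : ℝ) := by linarith
      have := mul_nonneg h3d hX0
      show 0 ≤ 3 * (d : ℝ) * ((10 / 3) * nsq d z0
          + (10 / 3) * nsq d v0 + Real.sqrt (yd1 d R y)) + 3 * max αT βT
      linarith
    have hBpos : 0 < Bfun d R y αT βT z0 v0 := lt_of_le_of_ne hB0 (Ne.symm hB)
    have hμB1 : μ0 * Bfun d R y αT βT z0 v0 ≤ 1 := by
      have h1 : μ0 ≤ (Bfun d R y αT βT z0 v0)⁻¹ := hμB t hB
      calc μ0 * Bfun d R y αT βT z0 v0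
          ≤ (Bfun d R y αT βT z0 v0)⁻¹ * Bfun d R y αT βT z0 v0 :=
            mul_le_mul_of_nonneg_right h1 hBpos.le
      _ = 1 := inv_mul_cancel₀ (ne_of_gt hBpos)
    have hνB1 : ν0 * Bfun d R y αT βT z0 v0 ≤ 1 := by
      have h1 : ν0 ≤ (Bfun d R y αT βT z0 v0)⁻¹ := hνB t hB
      calc ν0 * Bfun d R y αT βT z0 v0
          ≤ (Bfun d R y αT βT z0 v0)⁻¹ * Bfun d R y αT βT z0 v0 :=
            mul_le_mul_of_nonneg_right h1 hBpos.le
      _ = 1 := inv_mul_cancel₀ (ne_of_gt hBpos)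
    -- step expansion of the bilinear form
    have hQstep : ∀ r k : ZMod d, Qform d r k (z (t + 1)) (v (t + 1))
        = Qform d r k z0 v0 - (μ0 : ℂ) * Qform d r k g v0
          - (ν0 : ℂ) * Qform d r k z0 h + (μ0 : ℂ) * (ν0 : ℂ) * Qform d r k g h := by
      intro r k
      rw [hz1, hv1]
      exact Qform_expand d r k z0 v0 g h μ0 ν0
    -- the three linear sums
    set RP : ℝ := ∑ r ∈ R, ∑ k : ZMod d,
      ((coef ε (y r k) (Qform d r k z0 v0) : ℂ) * Qform d r k z0 v0 *
        (starRingEnd ℂ) (Qform d r k g v0)).re with hRPdef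
    set RQ : ℝ := ∑ r ∈ R, ∑ k : ZMod d,
      ((coef ε (y r k) (Qform d r k z0 v0) : ℂ) * Qform d r k z0 v0 *
        (starRingEnd ℂ) (Qform d r k z0 h)).re with hRQdef
    set RW : ℝ := ∑ r ∈ R, ∑ k : ZMod d,
      ((coef ε (y r k) (Qform d r k z0 v0) : ℂ) * Qform d r k z0 v0 *
        (starRingEnd ℂ) (Qform d r k g h)).re with hRWdef
    -- per-measurement loss bound
    have hkeyR : ∀ r ∈ R, lossR d y ε r (z (t + 1)) (v (t + 1))
        ≤ lossR d y ε r z0 v0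
          + ∑ k : ZMod d, (2 * coef ε (y r k) (Qform d r k z0 v0) *
              ((starRingEnd ℂ) (Qform d r k z0 v0) *
                (Qform d r k (z (t + 1)) (v (t + 1)) - Qform d r k z0 v0)).re
            + ‖Qform d r k (z (t + 1)) (v (t + 1)) - Qform d r k z0 v0‖ ^ 2) := by
      intro r _
      rw [lossR, lossR, ← Finset.sum_add_distrib]
      apply Finset.sum_le_sum
      intro k _
      have hk := key_ineq ε (Real.sqrt (y r k + ε)) hε (Real.sqrt_nonneg _)
        (Qform d r k z0 v0) (Qform d r k (z (t + 1)) (v (t + 1)))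
      rw [coef]
      linarith only [hk]
    have hloss : loss d R y ε (z (t + 1)) (v (t + 1)) ≤ loss d R y ε z0 v0
        + (∑ r ∈ R, ∑ k : ZMod d, 2 * coef ε (y r k) (Qform d r k z0 v0) *
            ((starRingEnd ℂ) (Qform d r k z0 v0) *
              (Qform d r k (z (t + 1)) (v (t + 1)) - Qform d r k z0 v0)).re)
        + (∑ r ∈ R, ∑ k : ZMod d,
            ‖Qform d r k (z (t + 1)) (v (t + 1)) - Qform d r k z0 v0‖ ^ 2) := by
      have h1 : loss d R y ε (z (t + 1)) (v (t + 1))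
          ≤ ∑ r ∈ R, (lossR d y ε r z0 v0
            + ∑ k : ZMod d, (2 * coef ε (y r k) (Qform d r k z0 v0) *
                ((starRingEnd ℂ) (Qform d r k z0 v0) *
                  (Qform d r k (z (t + 1)) (v (t + 1)) - Qform d r k z0 v0)).re
              + ‖Qform d r k (z (t + 1)) (v (t + 1)) - Qform d r k z0 v0‖ ^ 2)) :=
        Finset.sum_le_sum hkeyR
      refine h1.trans (le_of_eq ?_)
      rw [loss]
      simp only [Finset.sum_add_distrib]
      ring
    -- identify the linear term
    have hlin : (∑ r ∈ R, ∑ k : ZMod d, 2 * coef ε (y r k) (Qform d r k z0 v0) *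
          ((starRingEnd ℂ) (Qform d r k z0 v0) *
            (Qform d r k (z (t + 1)) (v (t + 1)) - Qform d r k z0 v0)).re)
        = -2 * μ0 * RP + -2 * ν0 * RQ + 2 * (μ0 * ν0) * RW := by
      rw [hRPdef, hRQdef, hRWdef]
      have h1 : ∀ r ∈ R, ∀ k : ZMod d, 2 * coef ε (y r k) (Qform d r k z0 v0) *
            ((starRingEnd ℂ) (Qform d r k z0 v0) *
              (Qform d r k (z (t + 1)) (v (t + 1)) - Qform d r k z0 v0)).re
          = (-2 * μ0) * ((coef ε (y r k) (Qform d r k z0 v0) : ℂ) * Qform d r k z0 v0 *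
                (starRingEnd ℂ) (Qform d r k g v0)).re
            + (-2 * ν0) * ((coef ε (y r k) (Qform d r k z0 v0) : ℂ) * Qform d r k z0 v0 *
                (starRingEnd ℂ) (Qform d r k z0 h)).re
            + (2 * (μ0 * ν0)) * ((coef ε (y r k) (Qform d r k z0 v0) : ℂ) * Qform d r k z0 v0 *
                (starRingEnd ℂ) (Qform d r k g h)).re := by
        intro r _ k
        rw [hQstep r k]
        exact relin (coef ε (y r k) (Qform d r k z0 v0)) μ0 ν0 (Qform d r k z0 v0)
          (Qform d r k g v0) (Qform d r k z0 h) (Qform d r k g h)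
      calc ∑ r ∈ R, ∑ k : ZMod d, 2 * coef ε (y r k) (Qform d r k z0 v0) *
            ((starRingEnd ℂ) (Qform d r k z0 v0) *
              (Qform d r k (z (t + 1)) (v (t + 1)) - Qform d r k z0 v0)).re
          = ∑ r ∈ R, ∑ k : ZMod d,
            ((-2 * μ0) * ((coef ε (y r k) (Qform d r k z0 v0) : ℂ) * Qform d r k z0 v0 *
                (starRingEnd ℂ) (Qform d r k g v0)).re
            + (-2 * ν0) * ((coef ε (y r k) (Qform d r k z0 v0) : ℂ) * Qform d r k z0 v0 *
                (starRingEnd ℂ) (Qform d r k z0 h)).re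
            + (2 * (μ0 * ν0)) * ((coef ε (y r k) (Qform d r k z0 v0) : ℂ) * Qform d r k z0 v0 *
                (starRingEnd ℂ) (Qform d r k g h)).re) := by
            apply Finset.sum_congr rfl; intro r hr
            apply Finset.sum_congr rfl; intro k _
            exact h1 r hr k
      _ = -2 * μ0 * (∑ r ∈ R, ∑ k : ZMod d,
              ((coef ε (y r k) (Qform d r k z0 v0) : ℂ) * Qform d r k z0 v0 *
                (starRingEnd ℂ) (Qform d r k g v0)).re)
            + -2 * ν0 * (∑ r ∈ R, ∑ k : ZMod d,
              ((coef ε (y r k) (Qform d r k z0 v0) : ℂ) * Qform d r k z0 v0 *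
                (starRingEnd ℂ) (Qform d r k z0 h)).re)
            + 2 * (μ0 * ν0) * (∑ r ∈ R, ∑ k : ZMod d,
              ((coef ε (y r k) (Qform d r k z0 v0) : ℂ) * Qform d r k z0 v0 *
                (starRingEnd ℂ) (Qform d r k g h)).re) := by
            simp only [Finset.sum_add_distrib, ← Finset.mul_sum]
    -- collapse RP, RQ to gradient norms
    have hRPval : RP = γ - αT * (∑ j : ZMod d, (starRingEnd ℂ) (g j) * z0 j).re := by
      have e1 : RP = (∑ r ∈ R, ∑ j : ZMod d, (starRingEnd ℂ) (g j) * gradZr d y ε r z0 v0 j).re := by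
        rw [hRPdef, Complex.re_sum]
        apply Finset.sum_congr rfl; intro r _
        rw [← Complex.re_sum, inner_gradZr d y ε r z0 v0 g]
      rw [e1, Finset.sum_comm]
      have e2 : ∀ j : ZMod d, ∑ r ∈ R, (starRingEnd ℂ) (g j) * gradZr d y ε r z0 v0 j
          = (starRingEnd ℂ) (g j) * g j - (αT : ℂ) * ((starRingEnd ℂ) (g j) * z0 j) := by
        intro j
        rw [← Finset.mul_sum]
        have hgj : g j = (∑ r ∈ R, gradZr d y ε r z0 v0 j) + (αT : ℂ) * z0 j := rfl
        have : (∑ r ∈ R, gradZr d y ε r z0 v0 j) = g j - (αT : ℂ) * z0 j := by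
          rw [hgj]; ring
        rw [this]; ring
      simp only [e2]
      rw [Finset.sum_sub_distrib, Complex.sub_re]
      have e3 : (∑ j : ZMod d, (starRingEnd ℂ) (g j) * g j).re = γ := by
        rw [hγdef, nsq, Complex.re_sum]
        apply Finset.sum_congr rfl; intro j _
        rw [mul_comm, Complex.mul_conj, Complex.sq_norm]
        simp
      have e4 : (∑ j : ZMod d, (αT : ℂ) * ((starRingEnd ℂ) (g j) * z0 j)).re
          = αT * (∑ j : ZMod d, (starRingEnd ℂ) (g j) * z0 j).re := by
        rw [← Finset.mul_sum, Complex.mul_re]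
        simp
      rw [e3, e4]
    have hRQval : RQ = η - βT * (∑ j : ZMod d, (starRingEnd ℂ) (h j) * v0 j).re := by
      have e1 : RQ = (∑ r ∈ R, ∑ j : ZMod d, (starRingEnd ℂ) (h j) * gradVr d y ε r z0 v0 j).re := by
        rw [hRQdef, Complex.re_sum]
        apply Finset.sum_congr rfl; intro r _
        rw [← Complex.re_sum, inner_gradVr d y ε r z0 v0 h]
      rw [e1, Finset.sum_comm]
      have e2 : ∀ j : ZMod d, ∑ r ∈ R, (starRingEnd ℂ) (h j) * gradVr d y ε r z0 v0 j
          = (starRingEnd ℂ) (h j) * h j - (βT : ℂ) * ((starRingEnd ℂ) (h j) * v0 j) := by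
        intro j
        rw [← Finset.mul_sum]
        have hhj : h j = (∑ r ∈ R, gradVr d y ε r z0 v0 j) + (βT : ℂ) * v0 j := rfl
        have : (∑ r ∈ R, gradVr d y ε r z0 v0 j) = h j - (βT : ℂ) * v0 j := by
          rw [hhj]; ring
        rw [this]; ring
      simp only [e2]
      rw [Finset.sum_sub_distrib, Complex.sub_re]
      have e3 : (∑ j : ZMod d, (starRingEnd ℂ) (h j) * h j).re = η := by
        rw [hηdef, nsq, Complex.re_sum]
        apply Finset.sum_congr rfl; intro j _
        rw [mul_comm, Complex.mul_conj, Complex.sq_norm]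
        simp
      have e4 : (∑ j : ZMod d, (βT : ℂ) * ((starRingEnd ℂ) (h j) * v0 j)).re
          = βT * (∑ j : ZMod d, (starRingEnd ℂ) (h j) * v0 j).re := by
        rw [← Finset.mul_sum, Complex.mul_re]
        simp
      rw [e3, e4]
    -- measurement sums
    have hyd : (d : ℝ) * yd1 d R y = ∑ r ∈ R, ∑ k : ZMod d, y r k := by
      unfold yd1
      field_simp
    have hSyy : ∑ r ∈ R, ∑ k : ZMod d, Real.sqrt (y r k) ^ 2 = (d : ℝ) * yd1 d R y := by
      rw [hyd]
      apply Finset.sum_congr rfl; intro r hr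
      apply Finset.sum_congr rfl; intro k _
      exact Real.sq_sqrt (hy r hr k)
    have hSc : ∑ r ∈ R, ∑ k : ZMod d, ‖Qform d r k z0 v0‖ ^ 2
        ≤ (d : ℝ) * (nsq d z0 * nsq d v0) := qsum_le d R z0 v0
    have hSW2 : ∑ r ∈ R, ∑ k : ZMod d, ‖Qform d r k g h‖ ^ 2
        ≤ (d : ℝ) * (γ * η) := qsum_le d R g h
    have hSP2 : ∑ r ∈ R, ∑ k : ZMod d, ‖Qform d r k g v0‖ ^ 2
        ≤ (d : ℝ) * (γ * nsq d v0) := qsum_le d R g v0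
    have hSQ2 : ∑ r ∈ R, ∑ k : ZMod d, ‖Qform d r k z0 h‖ ^ 2
        ≤ (d : ℝ) * (nsq d z0 * η) := qsum_le d R z0 h
    -- bound on RW
    have hRWle : RW ≤ (Real.sqrt ((d : ℝ) * (nsq d z0 * nsq d v0))
        + Real.sqrt ((d : ℝ) * yd1 d R y)) * Real.sqrt ((d : ℝ) * (γ * η)) := by
      have h1 : RW ≤ ∑ r ∈ R, ∑ k : ZMod d,
          ((‖Qform d r k z0 v0‖ + Real.sqrt (y r k))
            * ‖Qform d r k g h‖) := by
        rw [hRWdef]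
        apply Finset.sum_le_sum; intro r hr
        apply Finset.sum_le_sum; intro k _
        have hre := Complex.re_le_norm ((coef ε (y r k) (Qform d r k z0 v0) : ℂ)
          * Qform d r k z0 v0 * (starRingEnd ℂ) (Qform d r k g h))
        have habs : ‖(coef ε (y r k) (Qform d r k z0 v0) : ℂ)
            * Qform d r k z0 v0 * (starRingEnd ℂ) (Qform d r k g h)‖
            = |coef ε (y r k) (Qform d r k z0 v0)| * ‖Qform d r k z0 v0‖
              * ‖Qform d r k g h‖ := by
          rw [norm_mul, norm_mul, Complex.norm_real, Real.norm_eq_abs, Complex.norm_conj]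
        have hcb := coef_abs_le ε (y r k) hε (hy r hr k) (Qform d r k z0 v0)
        have hW0 : 0 ≤ ‖Qform d r k g h‖ := norm_nonneg _
        calc ((coef ε (y r k) (Qform d r k z0 v0) : ℂ) * Qform d r k z0 v0
              * (starRingEnd ℂ) (Qform d r k g h)).re
            ≤ |coef ε (y r k) (Qform d r k z0 v0)| * ‖Qform d r k z0 v0‖
              * ‖Qform d r k g h‖ := by rw [← habs]; exact hre
        _ ≤ (‖Qform d r k z0 v0‖ + Real.sqrt (y r k))
              * ‖Qform d r k g h‖ := mul_le_mul_of_nonneg_right hcb hW0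
      refine h1.trans ?_
      have h2 : ∑ r ∈ R, ∑ k : ZMod d,
          ((‖Qform d r k z0 v0‖ + Real.sqrt (y r k))
            * ‖Qform d r k g h‖)
          = (∑ r ∈ R, ∑ k : ZMod d,
              ‖Qform d r k z0 v0‖ * ‖Qform d r k g h‖)
            + (∑ r ∈ R, ∑ k : ZMod d,
              Real.sqrt (y r k) * ‖Qform d r k g h‖) := by
        simp only [add_mul, Finset.sum_add_distrib]
      rw [h2]
      have hCS1 := cs_sum2 R (Finset.univ : Finset (ZMod d))
        (fun r k => ‖Qform d r k z0 v0‖)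
        (fun r k => ‖Qform d r k g h‖)
      have hCS2 := cs_sum2 R (Finset.univ : Finset (ZMod d))
        (fun r k => Real.sqrt (y r k))
        (fun r k => ‖Qform d r k g h‖)
      have b1 : (∑ r ∈ R, ∑ k : ZMod d,
            ‖Qform d r k z0 v0‖ * ‖Qform d r k g h‖)
          ≤ Real.sqrt ((d : ℝ) * (nsq d z0 * nsq d v0)) * Real.sqrt ((d : ℝ) * (γ * η)) := by
        refine hCS1.trans ?_
        exact mul_le_mul (Real.sqrt_le_sqrt hSc) (Real.sqrt_le_sqrt hSW2)
          (Real.sqrt_nonneg _) (Real.sqrt_nonneg _)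
      have b2 : (∑ r ∈ R, ∑ k : ZMod d,
            Real.sqrt (y r k) * ‖Qform d r k g h‖)
          ≤ Real.sqrt ((d : ℝ) * yd1 d R y) * Real.sqrt ((d : ℝ) * (γ * η)) := by
        refine hCS2.trans ?_
        rw [hSyy]
        exact mul_le_mul_of_nonneg_left (Real.sqrt_le_sqrt hSW2) (Real.sqrt_nonneg _)
      linarith only [b1, b2]
    -- bound on the quadratic remainder
    have hSD : (∑ r ∈ R, ∑ k : ZMod d,
          ‖Qform d r k (z (t + 1)) (v (t + 1)) - Qform d r k z0 v0‖ ^ 2)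
        ≤ 3 * μ0 ^ 2 * ((d : ℝ) * (γ * nsq d v0)) + 3 * ν0 ^ 2 * ((d : ℝ) * (nsq d z0 * η))
          + 3 * (μ0 ^ 2 * ν0 ^ 2) * ((d : ℝ) * (γ * η)) := by
      have h1 : (∑ r ∈ R, ∑ k : ZMod d,
            ‖Qform d r k (z (t + 1)) (v (t + 1)) - Qform d r k z0 v0‖ ^ 2)
          ≤ ∑ r ∈ R, ∑ k : ZMod d,
            (3 * μ0 ^ 2 * ‖Qform d r k g v0‖ ^ 2
              + 3 * ν0 ^ 2 * ‖Qform d r k z0 h‖ ^ 2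
              + 3 * (μ0 ^ 2 * ν0 ^ 2) * ‖Qform d r k g h‖ ^ 2) := by
        apply Finset.sum_le_sum; intro r _
        apply Finset.sum_le_sum; intro k _
        rw [hQstep r k]
        have := absD_le μ0 ν0 hμnn hνnn (Qform d r k z0 v0) (Qform d r k g v0)
          (Qform d r k z0 h) (Qform d r k g h)
        linarith only [this]
      refine h1.trans ?_
      have h2 : ∑ r ∈ R, ∑ k : ZMod d,
            (3 * μ0 ^ 2 * ‖Qform d r k g v0‖ ^ 2
              + 3 * ν0 ^ 2 * ‖Qform d r k z0 h‖ ^ 2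
              + 3 * (μ0 ^ 2 * ν0 ^ 2) * ‖Qform d r k g h‖ ^ 2)
          = 3 * μ0 ^ 2 * (∑ r ∈ R, ∑ k : ZMod d, ‖Qform d r k g v0‖ ^ 2)
            + 3 * ν0 ^ 2 * (∑ r ∈ R, ∑ k : ZMod d, ‖Qform d r k z0 h‖ ^ 2)
            + 3 * (μ0 ^ 2 * ν0 ^ 2)
              * (∑ r ∈ R, ∑ k : ZMod d, ‖Qform d r k g h‖ ^ 2) := by
        simp only [Finset.sum_add_distrib, ← Finset.mul_sum]
      rw [h2]
      have c1 : 3 * μ0 ^ 2 * (∑ r ∈ R, ∑ k : ZMod d, ‖Qform d r k g v0‖ ^ 2)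
          ≤ 3 * μ0 ^ 2 * ((d : ℝ) * (γ * nsq d v0)) :=
        mul_le_mul_of_nonneg_left hSP2 (by positivity)
      have c2 : 3 * ν0 ^ 2 * (∑ r ∈ R, ∑ k : ZMod d, ‖Qform d r k z0 h‖ ^ 2)
          ≤ 3 * ν0 ^ 2 * ((d : ℝ) * (nsq d z0 * η)) :=
        mul_le_mul_of_nonneg_left hSQ2 (by positivity)
      have c3 : 3 * (μ0 ^ 2 * ν0 ^ 2)
            * (∑ r ∈ R, ∑ k : ZMod d, ‖Qform d r k g h‖ ^ 2)
          ≤ 3 * (μ0 ^ 2 * ν0 ^ 2) * ((d : ℝ) * (γ * η)) :=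
        mul_le_mul_of_nonneg_left hSW2 (by positivity)
      linarith only [c1, c2, c3]
    -- exact regularizer steps
    have hnz : nsq d (z (t + 1)) = nsq d z0
        - 2 * μ0 * (∑ j : ZMod d, (starRingEnd ℂ) (g j) * z0 j).re + μ0 ^ 2 * γ := by
      rw [hz1, nsq_step d z0 g μ0, re_swap d z0 g]
    have hnv : nsq d (v (t + 1)) = nsq d v0
        - 2 * ν0 * (∑ j : ZMod d, (starRingEnd ℂ) (h j) * v0 j).re + ν0 ^ 2 * η := by
      rw [hv1, nsq_step d v0 h ν0, re_swap d v0 h]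
    -- combine into a single bound
    rw [hlin, hRPval, hRQval] at hloss
    have hJ0 : Jfun d R y ε αT βT z0 v0
        = loss d R y ε z0 v0 + αT * nsq d z0 + βT * nsq d v0 := rfl
    have hJ1 : Jfun d R y ε αT βT (z (t + 1)) (v (t + 1))
        = loss d R y ε (z (t + 1)) (v (t + 1)) + αT * nsq d (z (t + 1))
          + βT * nsq d (v (t + 1)) := rfl
    -- numeric endgame
    have hBexp : Bfun d R y αT βT z0 v0
        = 10 * ((d : ℝ) * nsq d z0) + 10 * ((d : ℝ) * nsq d v0)
          + 3 * ((d : ℝ) * Real.sqrt (yd1 d R y)) + 3 * max αT βT := by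
      unfold Bfun; ring
    have hZV : Real.sqrt (nsq d z0 * nsq d v0) ≤ (nsq d z0 + nsq d v0) / 2 := by
      rw [Real.sqrt_mul hZ0]
      linarith only [Real.sq_sqrt hZ0, Real.sq_sqrt hV0,
        sq_nonneg (Real.sqrt (nsq d z0) - Real.sqrt (nsq d v0))]
    have hdy : 0 ≤ (d : ℝ) * Real.sqrt (yd1 d R y) := mul_nonneg hdpos.le hyd0
    have hdZ : 0 ≤ (d : ℝ) * nsq d z0 := mul_nonneg hdpos.le hZ0
    have hdV : 0 ≤ (d : ℝ) * nsq d v0 := mul_nonneg hdpos.le hV0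
    have hdZV : (d : ℝ) * Real.sqrt (nsq d z0 * nsq d v0)
        ≤ ((d : ℝ) * nsq d z0 + (d : ℝ) * nsq d v0) / 2 := by
      have h0 := mul_le_mul_of_nonneg_left hZV hdpos.le
      linarith only [h0]
    have hAzB : (d : ℝ) * Real.sqrt (nsq d z0 * nsq d v0) + (d : ℝ) * Real.sqrt (yd1 d R y)
        + 3 * ((d : ℝ) * nsq d v0) + αT ≤ (7 / 20) * Bfun d R y αT βT z0 v0 := by
      rw [hBexp]
      have hαm : αT ≤ max αT βT := le_max_left _ _
      linarith only [hdy, hdZ, hdV, hdZV, hαm, hmax0]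
    have hAvB : (d : ℝ) * Real.sqrt (nsq d z0 * nsq d v0) + (d : ℝ) * Real.sqrt (yd1 d R y)
        + 3 * ((d : ℝ) * nsq d z0) + βT ≤ (7 / 20) * Bfun d R y αT βT z0 v0 := by
      rw [hBexp]
      have hβm : βT ≤ max αT βT := le_max_right _ _
      linarith only [hdy, hdZ, hdV, hdZV, hβm, hmax0]
    have hμAz : μ0 * ((d : ℝ) * Real.sqrt (nsq d z0 * nsq d v0)
        + (d : ℝ) * Real.sqrt (yd1 d R y) + 3 * ((d : ℝ) * nsq d v0) + αT) ≤ 7 / 20 := by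
      have h1 := mul_le_mul_of_nonneg_left hAzB hμnn
      linarith only [h1, hμB1]
    have hνAv : ν0 * ((d : ℝ) * Real.sqrt (nsq d z0 * nsq d v0)
        + (d : ℝ) * Real.sqrt (yd1 d R y) + 3 * ((d : ℝ) * nsq d z0) + βT) ≤ 7 / 20 := by
      have h1 := mul_le_mul_of_nonneg_left hAvB hνnn
      linarith only [h1, hνB1]
    have hApartμ : (μ0 * γ) * (μ0 * ((d : ℝ) * Real.sqrt (nsq d z0 * nsq d v0)
        + (d : ℝ) * Real.sqrt (yd1 d R y) + 3 * ((d : ℝ) * nsq d v0) + αT))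
        ≤ (μ0 * γ) * (7 / 20) :=
      mul_le_mul_of_nonneg_left hμAz (mul_nonneg hμnn hγ0)
    have hApartν : (ν0 * η) * (ν0 * ((d : ℝ) * Real.sqrt (nsq d z0 * nsq d v0)
        + (d : ℝ) * Real.sqrt (yd1 d R y) + 3 * ((d : ℝ) * nsq d z0) + βT))
        ≤ (ν0 * η) * (7 / 20) :=
      mul_le_mul_of_nonneg_left hνAv (mul_nonneg hνnn hη0)
    -- RW term
    have hRW2 : 2 * (μ0 * ν0) * RW
        ≤ ((d : ℝ) * Real.sqrt (nsq d z0 * nsq d v0) + (d : ℝ) * Real.sqrt (yd1 d R y))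
          * (μ0 ^ 2 * γ + ν0 ^ 2 * η) := by
      have hsd1 : Real.sqrt ((d : ℝ) * (nsq d z0 * nsq d v0))
          = Real.sqrt (d : ℝ) * Real.sqrt (nsq d z0 * nsq d v0) := Real.sqrt_mul hdpos.le _
      have hsd2 : Real.sqrt ((d : ℝ) * yd1 d R y)
          = Real.sqrt (d : ℝ) * Real.sqrt (yd1 d R y) := Real.sqrt_mul hdpos.le _
      have hsd3 : Real.sqrt ((d : ℝ) * (γ * η))
          = Real.sqrt (d : ℝ) * Real.sqrt (γ * η) := Real.sqrt_mul hdpos.le _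
      have hdd : Real.sqrt (d : ℝ) * Real.sqrt (d : ℝ) = (d : ℝ) :=
        Real.mul_self_sqrt hdpos.le
      have h2μν : 0 ≤ 2 * (μ0 * ν0) := by
        have h0 := mul_nonneg hμnn hνnn; linarith only [h0]
      have hb : 2 * (μ0 * ν0) * Real.sqrt (γ * η) ≤ μ0 ^ 2 * γ + ν0 ^ 2 * η := by
        rw [Real.sqrt_mul hγ0]
        have e1 : μ0 ^ 2 * Real.sqrt γ ^ 2 = μ0 ^ 2 * γ := by rw [Real.sq_sqrt hγ0]
        have e2 : ν0 ^ 2 * Real.sqrt η ^ 2 = ν0 ^ 2 * η := by rw [Real.sq_sqrt hη0]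
        linarith only [sq_nonneg (μ0 * Real.sqrt γ - ν0 * Real.sqrt η), e1, e2]
      have hDnn : 0 ≤ (d : ℝ) * Real.sqrt (nsq d z0 * nsq d v0)
          + (d : ℝ) * Real.sqrt (yd1 d R y) := by
        have h0 := mul_nonneg hdpos.le (Real.sqrt_nonneg (nsq d z0 * nsq d v0))
        linarith only [h0, hdy]
      calc 2 * (μ0 * ν0) * RW
          ≤ 2 * (μ0 * ν0) * ((Real.sqrt ((d : ℝ) * (nsq d z0 * nsq d v0))
              + Real.sqrt ((d : ℝ) * yd1 d R y)) * Real.sqrt ((d : ℝ) * (γ * η))) :=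
            mul_le_mul_of_nonneg_left hRWle h2μν
      _ = ((d : ℝ) * Real.sqrt (nsq d z0 * nsq d v0) + (d : ℝ) * Real.sqrt (yd1 d R y))
            * (2 * (μ0 * ν0) * Real.sqrt (γ * η)) := by
          rw [hsd1, hsd2, hsd3]
          linear_combination (2 * (μ0 * ν0) * Real.sqrt (γ * η)
            * (Real.sqrt (nsq d z0 * nsq d v0) + Real.sqrt (yd1 d R y))) * hdd
      _ ≤ ((d : ℝ) * Real.sqrt (nsq d z0 * nsq d v0) + (d : ℝ) * Real.sqrt (yd1 d R y))
            * (μ0 ^ 2 * γ + ν0 ^ 2 * η) := mul_le_mul_of_nonneg_left hb hDnn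
    -- cube term
    have hPart3 : 3 * (μ0 ^ 2 * ν0 ^ 2) * ((d : ℝ) * (γ * η))
        ≤ (2 / 5) * (μ0 * γ) + (2 / 5) * (ν0 * η) := by
      rcases eq_or_lt_of_le hγ0 with hγe | hγp
      · rw [← hγe]
        have h1 := mul_nonneg hνnn hη0
        have h2 : 3 * (μ0 ^ 2 * ν0 ^ 2) * ((d : ℝ) * ((0:ℝ) * η)) = 0 := by ring
        rw [h2]
        linarith only [h1]
      · rcases eq_or_lt_of_le hη0 with hηe | hηp
        · rw [← hηe]
          have h1 := mul_nonneg hμnn hγ0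
          have h2 : 3 * (μ0 ^ 2 * ν0 ^ 2) * ((d : ℝ) * (γ * (0:ℝ))) = 0 := by ring
          rw [h2]
          linarith only [h1]
        · have hsγ : Real.sqrt γ ≠ 0 := ne_of_gt (Real.sqrt_pos.mpr hγp)
          have hsη : Real.sqrt η ≠ 0 := ne_of_gt (Real.sqrt_pos.mpr hηp)
          have hμ3 : μ0 ^ 3 * γ ≤ 4 / (15 * (d : ℝ)) :=
            cube_bound d μ0 γ hdpos hμnn hγp (hμz t hsγ)
          have hν3 : ν0 ^ 3 * η ≤ 4 / (15 * (d : ℝ)) :=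
            cube_bound d ν0 η hdpos hνnn hηp (hνv t hsη)
          have am : μ0 ^ 2 * ν0 ^ 2 * (γ * η)
              ≤ (μ0 ^ 3 * γ) * (ν0 * η) / 2 + (ν0 ^ 3 * η) * (μ0 * γ) / 2 := by
            linarith only [mul_nonneg (mul_nonneg (mul_nonneg hμnn hνnn)
              (sq_nonneg (μ0 - ν0))) (mul_nonneg hγ0 hη0)]
          have b1 : (μ0 ^ 3 * γ) * (ν0 * η) ≤ (4 / (15 * (d : ℝ))) * (ν0 * η) :=
            mul_le_mul_of_nonneg_right hμ3 (mul_nonneg hνnn hη0)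
          have b2 : (ν0 ^ 3 * η) * (μ0 * γ) ≤ (4 / (15 * (d : ℝ))) * (μ0 * γ) :=
            mul_le_mul_of_nonneg_right hν3 (mul_nonneg hμnn hγ0)
          have t1 : 3 * (μ0 ^ 2 * ν0 ^ 2) * ((d : ℝ) * (γ * η))
              = 3 * (d : ℝ) * (μ0 ^ 2 * ν0 ^ 2 * (γ * η)) := by ring
          have t2 : 3 * (d : ℝ) * (μ0 ^ 2 * ν0 ^ 2 * (γ * η))
              ≤ 3 * (d : ℝ) * ((4 / (15 * (d : ℝ))) * (ν0 * η) / 2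
                + (4 / (15 * (d : ℝ))) * (μ0 * γ) / 2) := by
            apply mul_le_mul_of_nonneg_left _ (by linarith only [hdpos])
            linarith only [am, b1, b2]
          have t3 : 3 * (d : ℝ) * ((4 / (15 * (d : ℝ))) * (ν0 * η) / 2
              + (4 / (15 * (d : ℝ))) * (μ0 * γ) / 2)
              = (2 / 5) * (μ0 * γ) + (2 / 5) * (ν0 * η) := by
            field_simp
            ring
          rw [t1]
          exact t2.trans (le_of_eq t3)
    -- conclude
    have hT : 2 * (μ0 * ν0) * RW
        + (3 * μ0 ^ 2 * ((d : ℝ) * (γ * nsq d v0)) + 3 * ν0 ^ 2 * ((d : ℝ) * (nsq d z0 * η))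
          + 3 * (μ0 ^ 2 * ν0 ^ 2) * ((d : ℝ) * (γ * η)))
        + αT * (μ0 ^ 2 * γ) + βT * (ν0 ^ 2 * η) ≤ μ0 * γ + ν0 * η := by
      linarith only [hRW2, hApartμ, hApartν, hPart3,
        mul_nonneg hμnn hγ0, mul_nonneg hνnn hη0]
    rw [hJ1, hnz, hnv, hJ0]
    linarith only [hloss, hSD, hT]



end Ptycho
end
end
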